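/- Proposition 4: For any d ≥ 0, the compound outage probability P(d) = sup{ μ(A) : D(μ‖μ0) ≤ d } satisfies ε ≤ P(d) ≤ min( d + (e − 1)·ε , 1 ), where ε = μ0(A) and e is Euler's number. -/

import Mathlib

open MeasureTheory Real Filter

open scoped Classical in
/-- Kullback–Leibler divergence `D(μ‖ν)` between measures, valued in `EReal`:
infinite unless `μ ≪ ν` and the log-likelihood ratio is `μ`-integrable. -/
noncomputable def klDiv {Ω : Type*} [MeasurableSpace Ω] (μ ν : Measure Ω) : EReal :=
  if μ ≪ ν ∧ Integrable (llr μ ν) μ then ((∫ ω, llr μ ν ω ∂μ : ℝ) : EReal) else ⊤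

/-- Compound outage probability for the class `{μ : D(μ‖μ0) ≤ d}`. -/
noncomputable def compoundOutage {Ω : Type*} [MeasurableSpace Ω] (μ0 : Measure Ω)
    (A : Set Ω) (d : ℝ) : ℝ :=
  sSup {p : ℝ | ∃ μ : Measure Ω, IsProbabilityMeasure μ ∧ klDiv μ μ0 ≤ (d : EReal) ∧
    p = (μ A).toReal}

/-- Pointwise Young-type inequality. -/
lemma young_aux (x b : ℝ) (hx : 0 ≤ x) : x * b ≤ x * Real.log x - x + Real.exp b := by
  rcases eq_or_lt_of_le hx with h | h
  · simp [← h]; positivity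
  · have ht := Real.add_one_le_exp (b - Real.log x)
    have h2 : x * ((b - Real.log x) + 1) ≤ x * Real.exp (b - Real.log x) :=
      mul_le_mul_of_nonneg_left ht hx
    rw [Real.exp_sub, Real.exp_log h] at h2
    have hx' : x * (Real.exp b / x) = Real.exp b := by field_simp
    nlinarith [h2]

/-- Key change-of-measure bound: `μ(A) ≤ D(μ‖μ0) + (e-1) μ0(A)`. -/
lemma key_bound {Ω : Type*} [MeasurableSpace Ω] (μ0 μ : Measure Ω)
    [IsProbabilityMeasure μ0] [IsProbabilityMeasure μ] (A : Set Ω) (hA : MeasurableSet A)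
    (hac : μ ≪ μ0) (hint : Integrable (llr μ μ0) μ) :
    (μ A).toReal ≤ (∫ ω, llr μ μ0 ω ∂μ) + (Real.exp 1 - 1) * (μ0 A).toReal := by
  set f : Ω → ℝ := fun ω => (μ.rnDeriv μ0 ω).toReal with hf
  have hf_nonneg : ∀ ω, 0 ≤ f ω := fun ω => ENNReal.toReal_nonneg
  have hf_int : Integrable f μ0 := Measure.integrable_toReal_rnDeriv
  have hfl_int : Integrable (fun ω => f ω • llr μ μ0 ω) μ0 :=
    (integrable_rnDeriv_smul_iff hac).mpr hint
  -- exp of the indicator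
  have hexp_eq : (fun ω => Real.exp (A.indicator (fun _ => (1:ℝ)) ω))
      = fun ω => A.indicator (fun _ => Real.exp 1 - 1) ω + 1 := by
    funext ω; by_cases hω : ω ∈ A <;> simp [hω]
  have hexp_int : Integrable (fun ω => Real.exp (A.indicator (fun _ => (1:ℝ)) ω)) μ0 := by
    rw [hexp_eq]
    exact ((integrable_const _).indicator hA).add (integrable_const 1)
  have hexp_val : ∫ ω, Real.exp (A.indicator (fun _ => (1:ℝ)) ω) ∂μ0
      = (Real.exp 1 - 1) * (μ0 A).toReal + 1 := by
    rw [hexp_eq, integral_add ((integrable_const _).indicator hA) (integrable_const 1),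
      integral_indicator_const _ hA, integral_const]
    simp [mul_comm, measureReal_def]
  -- LHS
  have hlhs_int : Integrable (fun ω => f ω • A.indicator (fun _ => (1:ℝ)) ω) μ0 :=
    (integrable_rnDeriv_smul_iff hac).mpr ((integrable_const (1:ℝ)).indicator hA)
  have hlhs_val : ∫ ω, f ω • A.indicator (fun _ => (1:ℝ)) ω ∂μ0 = (μ A).toReal := by
    rw [integral_rnDeriv_smul hac, integral_indicator_const _ hA]
    simp [measureReal_def]
  -- RHS
  have hrhs_int : Integrable
      (fun ω => f ω • llr μ μ0 ω - f ω + Real.exp (A.indicator (fun _ => (1:ℝ)) ω)) μ0 :=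
    (hfl_int.sub hf_int).add hexp_int
  have hfl_val : ∫ ω, f ω • llr μ μ0 ω ∂μ0 = ∫ ω, llr μ μ0 ω ∂μ :=
    integral_rnDeriv_smul hac
  have hf_val : ∫ ω, f ω ∂μ0 = 1 := by
    rw [hf]
    simp [Measure.integral_toReal_rnDeriv hac]
  -- pointwise inequality
  have hpt : ∀ ω, f ω • A.indicator (fun _ => (1:ℝ)) ω
      ≤ f ω • llr μ μ0 ω - f ω + Real.exp (A.indicator (fun _ => (1:ℝ)) ω) := by
    intro ω
    have := young_aux (f ω) (A.indicator (fun _ => (1:ℝ)) ω) (hf_nonneg ω)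
    simpa [smul_eq_mul, llr_def] using this
  have hsub_int : Integrable (fun ω => f ω • llr μ μ0 ω - f ω) μ0 := hfl_int.sub hf_int
  have hsplit : ∫ ω, (f ω • llr μ μ0 ω - f ω + Real.exp (A.indicator (fun _ => (1:ℝ)) ω)) ∂μ0
      = (∫ ω, f ω • llr μ μ0 ω ∂μ0) - (∫ ω, f ω ∂μ0)
        + ∫ ω, Real.exp (A.indicator (fun _ => (1:ℝ)) ω) ∂μ0 := by
    rw [integral_add hsub_int hexp_int, integral_sub hfl_int hf_int]
  have hmono := integral_mono hlhs_int hrhs_int hpt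
  rw [hlhs_val, hsplit, hfl_val, hf_val, hexp_val] at hmono
  linarith

/-- Proposition 4: `ε ≤ P(d) ≤ min(d + (e − 1)·ε, 1)`, where `ε = μ0(A)`. -/
theorem stmt_7 {Ω : Type*} [MeasurableSpace Ω] (μ0 : Measure Ω) [IsProbabilityMeasure μ0]
    (A : Set Ω) (hA : MeasurableSet A) (d : ℝ) (hd : 0 ≤ d) :
    (μ0 A).toReal ≤ compoundOutage μ0 A d ∧
    compoundOutage μ0 A d ≤ min (d + (Real.exp 1 - 1) * (μ0 A).toReal) 1 := by
  classical
  set S : Set ℝ := {p : ℝ | ∃ μ : Measure Ω, IsProbabilityMeasure μ ∧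
    klDiv μ μ0 ≤ (d : EReal) ∧ p = (μ A).toReal} with hS
  have hub : ∀ p ∈ S, p ≤ min (d + (Real.exp 1 - 1) * (μ0 A).toReal) 1 := by
    rintro p ⟨μ, hμprob, hkl, rfl⟩
    refine le_min ?_ ?_
    · unfold klDiv at hkl
      split_ifs at hkl with hc
      · have hd' : (∫ ω, llr μ μ0 ω ∂μ) ≤ d := by exact_mod_cast hkl
        have := key_bound μ0 μ A hA hc.1 hc.2
        linarith
      · exact absurd hkl (by simp)
    · have h1 : μ A ≤ μ Set.univ := measure_mono (Set.subset_univ A)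
      have := ENNReal.toReal_mono (measure_ne_top μ Set.univ) h1
      simpa using this
  have hmem : (μ0 A).toReal ∈ S := by
    refine ⟨μ0, inferInstance, ?_, rfl⟩
    have hzero : llr μ0 μ0 =ᵐ[μ0] fun _ => (0:ℝ) :=
      (Measure.rnDeriv_self μ0).mono fun ω hω => by simp [llr_def, hω]
    have hint : Integrable (llr μ0 μ0) μ0 := (integrable_const (0:ℝ)).congr hzero.symm
    have hval : ∫ ω, llr μ0 μ0 ω ∂μ0 = 0 := by
      rw [integral_congr_ae hzero]; simp
    unfold klDiv
    rw [if_pos ⟨Measure.AbsolutelyContinuous.refl μ0, hint⟩, hval]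
    exact_mod_cast hd
  constructor
  · exact le_csSup ⟨_, hub⟩ hmem
  · exact csSup_le ⟨_, hmem⟩ hub
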